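/- Fix T > 0 and integers n, m ≥ 1, and let A ∈ ℝ^{m×n} be the heat measurement matrix A_{ij} = g(j/n − i/m) where g(x) = (1/√(4πT)) e^{−x²/(4T)}. Then for every i ∈ {1,…,n−1}, the consecutive columns of A satisfy ‖A_i − A_{i+1}‖₂ ≤ √(m/(4πT)) · max{1 − e^{−3/(4nT)}, e^{1/(2nT)} − 1}; in particular there is a universal constant c > 0 such that whenever nT ≥ 1, ‖A_i − A_{i+1}‖₂ ≤ c √m /(n T^{3/2}). -/

import Mathlib

open scoped BigOperators
open Real

/-- The Euclidean (`ℓ₂`) norm of a vector in `ℝ^m`. -/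
noncomputable def l2norm {m : ℕ} (x : Fin m → ℝ) : ℝ := Real.sqrt (∑ i, (x i) ^ 2)

/-- The one-dimensional heat kernel `g(x) = (1/√(4πT)) e^(−x²/(4T))` at diffusion time `T`. -/
noncomputable def heatKernel (T x : ℝ) : ℝ :=
  (1 / Real.sqrt (4 * Real.pi * T)) * Real.exp (-x ^ 2 / (4 * T))

/-- The heat measurement matrix `A ∈ ℝ^{m×n}` with `A_{ij} = g(j/n − i/m)`:
sources on the grid `{1/n, …, 1}`, sensors at `{1/m, …, 1}`. -/
noncomputable def heatMatrix (T : ℝ) (m n : ℕ) : Matrix (Fin m) (Fin n) ℝ :=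
  Matrix.of fun i j => heatKernel T (((j : ℝ) + 1) / n - ((i : ℝ) + 1) / m)

lemma l2norm_le_bound {m : ℕ} {f : Fin m → ℝ} {C : ℝ} (hC : 0 ≤ C)
    (h : ∀ i, |f i| ≤ C) : l2norm f ≤ Real.sqrt m * C := by
  have h1 : ∑ i, (f i) ^ 2 ≤ (m : ℝ) * C ^ 2 := by
    calc ∑ i, (f i) ^ 2 ≤ ∑ _i : Fin m, C ^ 2 :=
          Finset.sum_le_sum fun i _ => by
            nlinarith [h i, abs_nonneg (f i), sq_abs (f i)]
      _ = (m : ℝ) * C ^ 2 := by simp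
  calc l2norm f ≤ Real.sqrt ((m : ℝ) * C ^ 2) := Real.sqrt_le_sqrt h1
    _ = Real.sqrt m * C := by
        rw [Real.sqrt_mul (Nat.cast_nonneg m), Real.sqrt_sq hC]

lemma abs_exp_sub_exp {u v : ℝ} (hu : 0 ≤ u) (hv : 0 ≤ v) :
    |Real.exp (-u) - Real.exp (-v)| ≤ 1 - Real.exp (-|u - v|) := by
  have key : ∀ a b : ℝ, 0 ≤ a → a ≤ b →
      Real.exp (-a) - Real.exp (-b) ≤ 1 - Real.exp (-(b - a)) := by
    intro a b ha hab
    have h1 : Real.exp (-a) ≤ 1 := by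
      rw [← Real.exp_zero]; exact Real.exp_le_exp.mpr (by linarith)
    have h2 : Real.exp (-(b - a)) ≤ 1 := by
      rw [← Real.exp_zero]; exact Real.exp_le_exp.mpr (by linarith)
    have h3 : Real.exp (-b) = Real.exp (-a) * Real.exp (-(b - a)) := by
      rw [← Real.exp_add]; ring_nf
    have h4 := Real.exp_pos (-(b - a))
    nlinarith
  rcases le_total u v with huv | huv
  · have h0 : Real.exp (-v) ≤ Real.exp (-u) := Real.exp_le_exp.mpr (by linarith)
    rw [abs_of_nonneg (by linarith), abs_of_nonpos (by linarith), neg_sub]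
    exact key u v hu huv
  · have h0 : Real.exp (-u) ≤ Real.exp (-v) := Real.exp_le_exp.mpr (by linarith)
    rw [abs_of_nonpos (by linarith), abs_of_nonneg (by linarith), neg_sub]
    have := key v u hv huv
    linarith

lemma heatKernel_diff_bound {T : ℝ} (hT : 0 < T) {x y d : ℝ}
    (hd : |x ^ 2 - y ^ 2| ≤ d) :
    |heatKernel T x - heatKernel T y| ≤
      (1 / Real.sqrt (4 * Real.pi * T)) * (1 - Real.exp (-(d / (4 * T)))) := by
  have hc0 : (0:ℝ) ≤ 1 / Real.sqrt (4 * Real.pi * T) := by positivity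
  have hkey : heatKernel T x - heatKernel T y =
      (1 / Real.sqrt (4 * Real.pi * T)) *
        (Real.exp (-(x ^ 2 / (4 * T))) - Real.exp (-(y ^ 2 / (4 * T)))) := by
    simp only [heatKernel, neg_div]
    ring
  rw [hkey, abs_mul, abs_of_nonneg hc0]
  have hb := abs_exp_sub_exp (u := x ^ 2 / (4 * T)) (v := y ^ 2 / (4 * T))
    (by positivity) (by positivity)
  have habs : |x ^ 2 / (4 * T) - y ^ 2 / (4 * T)| ≤ d / (4 * T) := by
    rw [div_sub_div_same, abs_div, abs_of_pos (by positivity : (0:ℝ) < 4 * T)]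
    exact div_le_div_of_nonneg_right hd (by positivity) |>.trans_eq rfl
  have hmono : 1 - Real.exp (-|x ^ 2 / (4 * T) - y ^ 2 / (4 * T)|) ≤
      1 - Real.exp (-(d / (4 * T))) := by
    have := Real.exp_le_exp.mpr (neg_le_neg habs)
    linarith
  exact mul_le_mul_of_nonneg_left (hb.trans hmono) hc0

theorem heatMatrix_consecutive_columns_close :
    (∀ (T : ℝ) (m n : ℕ), 0 < T → 1 ≤ m → 1 ≤ n →
      ∀ (j : Fin n) (h : j.val + 1 < n),
        l2norm (fun i => heatMatrix T m n i j - heatMatrix T m n i ⟨j.val + 1, h⟩) ≤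
          Real.sqrt (m / (4 * Real.pi * T)) *
            max (1 - Real.exp (-3 / (4 * n * T))) (Real.exp (1 / (2 * n * T)) - 1)) ∧
    ∃ c : ℝ, 0 < c ∧ ∀ (T : ℝ) (m n : ℕ), 0 < T → 1 ≤ m → 1 ≤ n → 1 ≤ (n : ℝ) * T →
      ∀ (j : Fin n) (h : j.val + 1 < n),
        l2norm (fun i => heatMatrix T m n i j - heatMatrix T m n i ⟨j.val + 1, h⟩) ≤
          c * Real.sqrt m / (n * T ^ ((3 : ℝ) / 2)) := by
  have key : ∀ (T : ℝ) (m n : ℕ), 0 < T → 1 ≤ m → 1 ≤ n →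
      ∀ (j : Fin n) (h : j.val + 1 < n),
        l2norm (fun i => heatMatrix T m n i j - heatMatrix T m n i ⟨j.val + 1, h⟩) ≤
          Real.sqrt m *
            ((1 / Real.sqrt (4 * Real.pi * T)) * (1 - Real.exp (-3 / (4 * n * T)))) := by
    intro T m n hT hm hn j h
    have hn' : (0:ℝ) < n := by exact_mod_cast hn
    have hm' : (0:ℝ) < m := by exact_mod_cast hm
    have hE : Real.exp (-3 / (4 * n * T)) ≤ 1 := by
      rw [← Real.exp_zero]
      apply Real.exp_le_exp.mpr
      have : (0:ℝ) < 4 * n * T := by positivity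
      rw [div_nonpos_iff]
      right; constructor <;> nlinarith
    apply l2norm_le_bound (mul_nonneg (by positivity) (by linarith))
    intro i
    -- the two arguments of the heat kernel
    set x : ℝ := ((j:ℝ) + 1) / n - ((i:ℝ) + 1) / m with hx
    set y : ℝ := ((j:ℝ) + 1 + 1) / n - ((i:ℝ) + 1) / m with hy
    have hentry : heatMatrix T m n i j - heatMatrix T m n i ⟨j.val + 1, h⟩ =
        heatKernel T x - heatKernel T y := by
      simp only [heatMatrix, Matrix.of_apply, hx, hy]
      congr 2
      push_cast
      ring
    -- bounds on x
    have hjn : ((j:ℝ) + 1) ≤ n := by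
      have : (j:ℕ) + 1 ≤ n := h.le
      exact_mod_cast this
    have him : ((i:ℝ) + 1) ≤ m := by
      have : (i:ℕ) + 1 ≤ m := i.isLt
      exact_mod_cast this
    have hx1 : |x| ≤ 1 := by
      rw [abs_le]
      constructor
      · have h1 : ((i:ℝ) + 1) / m ≤ 1 := by rw [div_le_one hm']; linarith
        have h2 : (0:ℝ) ≤ ((j:ℝ) + 1) / n := by positivity
        simp only [hx]; linarith
      · have h1 : ((j:ℝ) + 1) / n ≤ 1 := by rw [div_le_one hn']; linarith
        have h2 : (0:ℝ) ≤ ((i:ℝ) + 1) / m := by positivity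
        simp only [hx]; linarith
    have hyx : y = x + 1 / n := by
      simp only [hx, hy]; field_simp; ring
    have hy1 : |y| ≤ 2 := by
      rw [hyx]
      have h1 : (0:ℝ) < 1 / n := by positivity
      have h2 : (1:ℝ) / n ≤ 1 := by
        rw [div_le_one hn']; exact_mod_cast hn
      calc |x + 1 / (n:ℝ)| ≤ |x| + |1 / (n:ℝ)| := abs_add_le _ _
        _ ≤ 1 + 1 := add_le_add hx1 (by rw [abs_of_pos h1]; exact h2)
        _ = 2 := by norm_num
    -- bound on |x² − y²|
    have hd : |x ^ 2 - y ^ 2| ≤ 3 / n := by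
      have h1 : x ^ 2 - y ^ 2 = (x - y) * (x + y) := by ring
      rw [h1, abs_mul]
      have h2 : |x - y| = 1 / n := by
        rw [hyx]
        simp [abs_of_pos (show (0:ℝ) < 1/n by positivity)]
      have h3 : |x + y| ≤ 3 := by
        calc |x + y| ≤ |x| + |y| := abs_add_le _ _
          _ ≤ 3 := by linarith [hx1, hy1]
      rw [h2]
      calc (1 / (n:ℝ)) * |x + y| ≤ (1 / n) * 3 :=
            mul_le_mul_of_nonneg_left h3 (by positivity)
        _ = 3 / n := by ring
    have hbd := heatKernel_diff_bound hT hd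
    rw [hentry]
    refine hbd.trans ?_
    have harg : -((3:ℝ) / n / (4 * T)) = -3 / (4 * n * T) := by
      field_simp
    rw [harg]
  constructor
  · intro T m n hT hm hn j h
    have hsq : Real.sqrt ((m:ℝ) / (4 * Real.pi * T)) =
        Real.sqrt m * (1 / Real.sqrt (4 * Real.pi * T)) := by
      rw [Real.sqrt_div (Nat.cast_nonneg m)]
      ring
    refine (key T m n hT hm hn j h).trans ?_
    rw [hsq]
    have h1 : (0:ℝ) ≤ Real.sqrt m * (1 / Real.sqrt (4 * Real.pi * T)) := by positivity
    calc Real.sqrt m * ((1 / Real.sqrt (4 * Real.pi * T)) *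
          (1 - Real.exp (-3 / (4 * n * T))))
        = (Real.sqrt m * (1 / Real.sqrt (4 * Real.pi * T))) *
          (1 - Real.exp (-3 / (4 * n * T))) := by ring
      _ ≤ (Real.sqrt m * (1 / Real.sqrt (4 * Real.pi * T))) *
          max (1 - Real.exp (-3 / (4 * n * T))) (Real.exp (1 / (2 * n * T)) - 1) :=
          mul_le_mul_of_nonneg_left (le_max_left _ _) h1
  · refine ⟨1, one_pos, ?_⟩
    intro T m n hT hm hn _hnT j h
    refine (key T m n hT hm hn j h).trans ?_
    have hn' : (0:ℝ) < n := by exact_mod_cast hn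
    have hTs : (0:ℝ) < Real.sqrt T := Real.sqrt_pos.mpr hT
    have hπ : (3:ℝ) < Real.pi := Real.pi_gt_three
    -- √(4πT) ≥ 2√T
    have hsqrtT : 2 * Real.sqrt T ≤ Real.sqrt (4 * Real.pi * T) := by
      have h4T : Real.sqrt (4 * T) = 2 * Real.sqrt T := by
        rw [show (4:ℝ) * T = 2 ^ 2 * T by ring, Real.sqrt_mul (by positivity),
          Real.sqrt_sq (by norm_num)]
      rw [← h4T]
      exact Real.sqrt_le_sqrt (by nlinarith)
    have hc0 : (1:ℝ) / Real.sqrt (4 * Real.pi * T) ≤ 1 / (2 * Real.sqrt T) := by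
      apply div_le_div_of_nonneg_left one_pos.le (by positivity) hsqrtT
    -- 1 − e^{−s} ≤ s
    have hlin : 1 - Real.exp (-3 / (4 * n * T)) ≤ 3 / (4 * n * T) := by
      have h' := Real.add_one_le_exp (-3 / (4 * (n:ℝ) * T))
      have h'' : (-3:ℝ) / (4 * n * T) = -(3 / (4 * n * T)) := by ring
      linarith [h'', h']
    have hEnn : (0:ℝ) ≤ 1 - Real.exp (-3 / (4 * n * T)) := by
      have : Real.exp (-3 / (4 * (n:ℝ) * T)) ≤ 1 := by
        rw [← Real.exp_zero]
        apply Real.exp_le_exp.mpr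
        have h4 : (0:ℝ) < 4 * n * T := by positivity
        rw [div_nonpos_iff]
        right; constructor <;> nlinarith
      linarith
    have h32 : T ^ ((3:ℝ) / 2) = T * Real.sqrt T := by
      rw [show (3:ℝ)/2 = 1 + 1/2 by norm_num, Real.rpow_add hT, Real.rpow_one,
        ← Real.sqrt_eq_rpow]
    rw [h32]
    have hstep : (1 / Real.sqrt (4 * Real.pi * T)) * (1 - Real.exp (-3 / (4 * n * T)))
        ≤ (1 / (2 * Real.sqrt T)) * (3 / (4 * n * T)) := by
      apply mul_le_mul hc0 hlin hEnn (by positivity)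
    calc Real.sqrt m * ((1 / Real.sqrt (4 * Real.pi * T)) *
          (1 - Real.exp (-3 / (4 * n * T))))
        ≤ Real.sqrt m * ((1 / (2 * Real.sqrt T)) * (3 / (4 * n * T))) :=
          mul_le_mul_of_nonneg_left hstep (Real.sqrt_nonneg m)
      _ = (3/8) * (Real.sqrt m / (n * (T * Real.sqrt T))) := by
          field_simp; ring
      _ ≤ 1 * Real.sqrt m / (n * (T * Real.sqrt T)) := by
          rw [mul_div_assoc, one_mul]
          have hX : (0:ℝ) ≤ Real.sqrt m / (n * (T * Real.sqrt T)) := by positivity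
          nlinarith
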